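/- The map taking a proper caterpillar to the reverse-class of its composition (where the i-th component is the number of vertices in the connected component containing the i-th spine vertex after removing all internal edges) is injective up to graph isomorphism. -/

import Mathlib

open SimpleGraph

/-- Degree of a vertex (as the number of neighbors). -/
noncomputable def deg {V : Type} [Fintype V] (T : SimpleGraph V) (v : V) : ℕ :=
  (T.neighborSet v).ncard

/-- The partition of `|V|` given by the sizes of the connected components of `G`. -/
noncomputable def compPartition {V : Type} [Fintype V] (G : SimpleGraph V) : Multiset ℕ :=
  letI : Fintype G.ConnectedComponent := Fintype.ofFinite _
  (Finset.univ : Finset G.ConnectedComponent).val.map fun c => Nat.card c.supp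

/-- The U-polynomial of a graph, encoded as the multiset of monomials `x_{λ(A)}`
over edge subsets `A`; each monomial is recorded as the partition `λ(A)`. -/
noncomputable def Upoly {V : Type} [Fintype V] (T : SimpleGraph V) : Multiset (Multiset ℕ) :=
  letI := Classical.decEq V
  letI : DecidablePred fun A : Finset (Sym2 V) => ↑A ⊆ T.edgeSet :=
    fun _ => Classical.propDecidable _
  (((Finset.univ : Finset (Sym2 V)).powerset.filter
      fun A => ↑A ⊆ T.edgeSet)).val.map
    fun A => compPartition (SimpleGraph.fromEdgeSet (↑A : Set (Sym2 V)))

/-- The set of leaf-edges of a graph: edges incident to a vertex of degree 1. -/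
def leafEdges {V : Type} [Fintype V] (T : SimpleGraph V) : Set (Sym2 V) :=
  {e | e ∈ T.edgeSet ∧ ∃ v ∈ e, deg T v = 1}

/-- The restricted U-polynomial: only edge subsets containing all leaf-edges. -/
noncomputable def UpolyL {V : Type} [Fintype V] (T : SimpleGraph V) : Multiset (Multiset ℕ) :=
  letI := Classical.decEq V
  letI : DecidablePred fun A : Finset (Sym2 V) =>
      (↑A : Set (Sym2 V)) ⊆ T.edgeSet ∧ leafEdges T ⊆ (↑A : Set (Sym2 V)) :=
    fun _ => Classical.propDecidable _
  (((Finset.univ : Finset (Sym2 V)).powerset.filter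
      fun A : Finset (Sym2 V) => (↑A : Set (Sym2 V)) ⊆ T.edgeSet ∧ leafEdges T ⊆ (↑A : Set (Sym2 V)))).val.map
    fun A => compPartition (SimpleGraph.fromEdgeSet (↑A : Set (Sym2 V)))

/-- The edges along a list of vertices (consecutive pairs). -/
def spineEdges {V : Type} (s : List V) : Set (Sym2 V) :=
  {e | ∃ i : ℕ, ∃ h : i + 1 < s.length,
    e = s(s.get ⟨i, Nat.lt_of_succ_lt h⟩, s.get ⟨i + 1, h⟩)}

/-- `s` is the spine of `T`: a nonempty path whose vertices are exactly the
internal (degree ≥ 2) vertices of `T`. -/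
def IsSpine {V : Type} [Fintype V] (T : SimpleGraph V) (s : List V) : Prop :=
  s ≠ [] ∧ s.Nodup ∧ s.Chain' T.Adj ∧ ∀ v : V, v ∈ s ↔ 2 ≤ deg T v

/-- A caterpillar: a tree whose internal vertices induce a non-trivial path. -/
def IsCaterpillar {V : Type} [Fintype V] (T : SimpleGraph V) : Prop :=
  T.IsTree ∧ ∃ s : List V, IsSpine T s

/-- A proper caterpillar: every spine vertex is adjacent to at least one leaf. -/
def IsProperCaterpillar {V : Type} [Fintype V] (T : SimpleGraph V) : Prop :=
  T.IsTree ∧ ∃ s : List V, IsSpine T s ∧ ∀ v ∈ s, ∃ w, T.Adj v w ∧ deg T w = 1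

/-- The composition associated to a caterpillar with spine `s`: the `i`-th
component is the size of the connected component of the `i`-th spine vertex
after deleting all spine edges. -/
noncomputable def catComp {V : Type} [Fintype V] (T : SimpleGraph V) (s : List V) : List ℕ :=
  s.map fun v =>
    Nat.card ((T.deleteEdges (spineEdges s)).connectedComponentMk v).supp

/-- Setting `x₁ = 0` in a polynomial encoded as a multiset of monomials:
all monomials containing `x₁` vanish. -/
def evalXoneZero (P : Multiset (Multiset ℕ)) : Multiset (Multiset ℕ) :=
  P.filter fun m => (1 : ℕ) ∉ m


set_option linter.unusedSectionVars false

section AuxProof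

variable {V : Type} [Fintype V] {T : SimpleGraph V} {s : List V}

lemma nbr_unique {x y z : V} (h : deg T x = 1) (h1 : T.Adj x y) (h2 : T.Adj x z) : y = z := by
  obtain ⟨a, ha⟩ := Set.ncard_eq_one.mp h
  have hy : y ∈ T.neighborSet x := h1
  have hz : z ∈ T.neighborSet x := h2
  rw [ha] at hy hz
  rw [hy, hz]

lemma exists_nbr (hc : T.Connected) {x y : V} (hxy : x ≠ y) : ∃ z, T.Adj x z := by
  obtain ⟨p⟩ := hc.preconnected x y
  cases p with
  | nil => exact absurd rfl hxy
  | cons h q => exact ⟨_, h⟩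

lemma deg_pos_of_adj {x z : V} (h : T.Adj x z) : 1 ≤ deg T x := by
  have : (T.neighborSet x).Nonempty := ⟨z, h⟩
  have := Set.ncard_pos (s := T.neighborSet x) (Set.toFinite _)
  exact this.mpr ‹_›

lemma two_le_deg_of_mem (hs : IsSpine T s) {v : V} (hv : v ∈ s) : 2 ≤ deg T v :=
  (hs.2.2.2 v).mp hv

lemma ne_of_deg {x y : V} (h1 : deg T x = 1) (h2 : 2 ≤ deg T y) : x ≠ y := by
  rintro rfl; omega

lemma leaf_deg_one (hc : T.Connected) (hs : IsSpine T s) {x : V} (hx : x ∉ s) :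
    deg T x = 1 := by
  have hv0 : s.head hs.1 ∈ s := List.head_mem hs.1
  have hne : x ≠ s.head hs.1 := fun h => hx (h ▸ hv0)
  obtain ⟨z, hz⟩ := exists_nbr hc hne
  have h1 := deg_pos_of_adj hz
  have h2 : ¬ 2 ≤ deg T x := fun h => hx ((hs.2.2.2 x).mpr h)
  omega

lemma leaf_nbr_mem (hc : T.Connected) (hs : IsSpine T s) {x y : V}
    (hx : x ∉ s) (ha : T.Adj x y) : y ∈ s := by
  by_contra hy
  have hdx : deg T x = 1 := leaf_deg_one hc hs hx
  have hdy : deg T y = 1 := leaf_deg_one hc hs hy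
  have hv0 : s.head hs.1 ∈ s := List.head_mem hs.1
  have hd0 : 2 ≤ deg T (s.head hs.1) := two_le_deg_of_mem hs hv0
  classical
  obtain ⟨w⟩ := hc.preconnected x (s.head hs.1)
  obtain ⟨q, hq⟩ := w.toPath
  cases q with
  | nil => omega
  | cons h1 r1 =>
    rename_i c
    have hcy : c = y := nbr_unique hdx h1 ha
    subst hcy
    cases r1 with
    | nil => omega
    | cons h2 r2 =>
      rename_i d
      have hdx2 : d = x := nbr_unique hdy h2 ha.symm
      subst hdx2
      have := hq.support_nodup
      simp [SimpleGraph.Walk.support_cons] at this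

def listWalk (T : SimpleGraph V) :
    (l : List V) → l.Chain' T.Adj → (hne : l ≠ []) → T.Walk (l.head hne) (l.getLast hne)
  | [_], _, _ => SimpleGraph.Walk.nil
  | _ :: b :: t, hc, _ =>
      (SimpleGraph.Walk.cons ((List.isChain_cons_cons.mp hc).1)
        (listWalk T (b :: t) ((List.isChain_cons_cons.mp hc).2) (by simp))).copy rfl
        (List.getLast_cons (by simp)).symm

lemma listWalk_support (T : SimpleGraph V) :
    ∀ (l : List V) (hc : l.Chain' T.Adj) (hne : l ≠ []),
      (listWalk T l hc hne).support = l
  | [_], _, _ => rfl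
  | a :: b :: t, hc, _ => by
      rw [listWalk]
      exact (SimpleGraph.Walk.support_copy ..).trans (congrArg (a :: ·) (listWalk_support T (b :: t) _ _))

lemma listWalk_length (T : SimpleGraph V) :
    ∀ (l : List V) (hc : l.Chain' T.Adj) (hne : l ≠ []),
      (listWalk T l hc hne).length = l.length - 1
  | [_], _, _ => rfl
  | a :: b :: t, hc, _ => by
      rw [listWalk]
      exact (SimpleGraph.Walk.length_copy ..).trans ((congrArg (· + 1) (listWalk_length T (b :: t) _ _)).trans (by simp))

lemma spine_adj_of_consec (hs : IsSpine T s) (i j : Fin s.length) (h : (i : ℕ) + 1 = (j : ℕ)) :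
    T.Adj (s.get i) (s.get j) := by
  have hlt : (i : ℕ) + 1 < s.length := h ▸ j.isLt
  have hlt' : (i : ℕ) < s.length - 1 := by omega
  have hc := List.isChain_iff_getElem.mp hs.2.2.1 i hlt
  have h1 : (⟨(i : ℕ), by omega⟩ : Fin s.length) = i := Fin.ext rfl
  have h2 : (⟨(i : ℕ) + 1, by omega⟩ : Fin s.length) = j := Fin.ext h
  simpa [List.get_eq_getElem, ← h] using hc

lemma no_skip_adj (hT : T.IsTree) (hs : IsSpine T s) (i j : Fin s.length)
    (hij : (i : ℕ) + 1 < (j : ℕ)) : ¬ T.Adj (s.get i) (s.get j) := by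
  intro hadj
  set l : List V := (s.drop i).take (j - i + 1) with hl
  have hlen : l.length = j - ↑i + 1 := by
    simp only [hl, List.length_take, List.length_drop]
    have := j.isLt; omega
  have hne : l ≠ [] := by
    intro h; rw [h] at hlen; simp at hlen
  have hget : ∀ m (hm : m < l.length), l[m] = s[(i : ℕ) + m]'(by have := j.isLt; omega) := by
    intro m hm
    simp only [hl, List.getElem_take, List.getElem_drop]
  have hchain : l.Chain' T.Adj := by
    change List.IsChain T.Adj l
    rw [List.isChain_iff_getElem]
    intro m hm
    rw [hget m (by omega), hget (m+1) (by omega)]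
    have := List.isChain_iff_getElem.mp hs.2.2.1 ((i:ℕ) + m) (by have := j.isLt; have := hm; rw [hlen] at this; omega)
    simpa [← Nat.add_assoc] using this
  have hhead : l.head hne = s.get i := by
    rw [List.head_eq_getElem, hget 0 (by omega)]
    simp [List.get_eq_getElem]
  have hlast : l.getLast hne = s.get j := by
    rw [List.getLast_eq_getElem, hget _ (by omega)]
    simp only [List.get_eq_getElem]
    congr 1
    have := j.isLt; omega
  have hnodup : l.Nodup :=
    (((List.take_sublist _ _).trans (List.drop_sublist _ _))).nodup hs.2.1
  let W1 : T.Walk (s.get i) (s.get j) := (listWalk T l hchain hne).copy hhead hlast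
  have hW1path : W1.IsPath := by
    rw [SimpleGraph.Walk.isPath_def]
    simpa [W1, listWalk_support] using hnodup
  let W2 : T.Walk (s.get i) (s.get j) := hadj.toWalk
  have hW2path : W2.IsPath := by
    simp [W2, SimpleGraph.Walk.isPath_def, SimpleGraph.Adj.toWalk]
    intro h
    exact hadj.ne (by simpa using congrArg (fun x => x) h)
  obtain ⟨-, hu⟩ := SimpleGraph.isTree_iff_existsUnique_path.mp hT
  obtain ⟨p0, -, hup⟩ := hu (s.get i) (s.get j)
  have hEq : W1 = W2 := (hup W1 hW1path).trans (hup W2 hW2path).symm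
  have h1 : W1.length = l.length - 1 := by
    simp [W1, listWalk_length]
  have h2 : W2.length = 1 := rfl
  rw [hEq, h2] at h1
  omega

lemma spine_adj_iff (hT : T.IsTree) (hs : IsSpine T s) (i j : Fin s.length) :
    T.Adj (s.get i) (s.get j) ↔ ((i : ℕ) + 1 = (j : ℕ) ∨ (j : ℕ) + 1 = (i : ℕ)) := by
  constructor
  · intro h
    by_contra hc
    push_neg at hc
    rcases Nat.lt_trichotomy (i : ℕ) (j : ℕ) with hlt | heq | hgt
    · exact no_skip_adj hT hs i j (by omega) h
    · exact h.ne (congrArg s.get (Fin.ext heq))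
    · exact no_skip_adj hT hs j i (by omega) h.symm
  · rintro (h | h)
    · exact spine_adj_of_consec hs i j h
    · exact (spine_adj_of_consec hs j i h).symm

def leafSet (T : SimpleGraph V) (s : List V) (i : Fin s.length) : Set V :=
  {x | T.Adj (s.get i) x ∧ x ∉ s}

lemma spineEdges_mem_spine {a b : V} (h : s(a, b) ∈ spineEdges s) : a ∈ s ∧ b ∈ s := by
  obtain ⟨i, hi, he⟩ := h
  rw [Sym2.eq_iff] at he
  rcases he with ⟨rfl, rfl⟩ | ⟨rfl, rfl⟩ <;>
    exact ⟨List.get_mem _ _, List.get_mem _ _⟩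

lemma del_adj (hT : T.IsTree) (hs : IsSpine T s) {a b : V} :
    (T.deleteEdges (spineEdges s)).Adj a b ↔ T.Adj a b ∧ ¬(a ∈ s ∧ b ∈ s) := by
  rw [SimpleGraph.deleteEdges_adj]
  constructor
  · rintro ⟨hadj, hne⟩
    refine ⟨hadj, fun ⟨ha, hb⟩ => hne ?_⟩
    obtain ⟨i, rfl⟩ := List.mem_iff_get.mp ha
    obtain ⟨j, rfl⟩ := List.mem_iff_get.mp hb
    rcases (spine_adj_iff hT hs i j).mp hadj with h | h
    · refine ⟨i, by omega, ?_⟩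
      exact congrArg₂ (fun a b => s(a, b)) rfl (congrArg s.get (Fin.ext h.symm))
    · refine ⟨j, by omega, ?_⟩
      rw [Sym2.eq_swap]
      exact congrArg₂ (fun a b => s(a, b)) rfl (congrArg s.get (Fin.ext h.symm))
  · rintro ⟨hadj, hns⟩
    exact ⟨hadj, fun h => hns (spineEdges_mem_spine h)⟩

lemma supp_structure (hT : T.IsTree) (hs : IsSpine T s) (i : Fin s.length) :
    ((T.deleteEdges (spineEdges s)).connectedComponentMk (s.get i)).supp
      = insert (s.get i) (leafSet T s i) := by
  set G := T.deleteEdges (spineEdges s) with hG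
  have hstep : ∀ a b : V, a ∈ insert (s.get i) (leafSet T s i) → G.Adj a b →
      b ∈ insert (s.get i) (leafSet T s i) := by
    intro a b ha hab
    rw [hG, del_adj hT hs] at hab
    rcases ha with rfl | ⟨haadj, hans⟩
    · have hbs : b ∉ s := fun hb => hab.2 ⟨List.get_mem _ _, hb⟩
      exact Set.mem_insert_iff.mpr (Or.inr ⟨hab.1, hbs⟩)
    · have hda : deg T a = 1 := leaf_deg_one hT.isConnected hs hans
      have : b = s.get i := nbr_unique hda hab.1 haadj.symm
      exact this ▸ Set.mem_insert _ _
  ext x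
  rw [SimpleGraph.ConnectedComponent.mem_supp_iff]
  constructor
  · intro hx
    have hreach : G.Reachable (s.get i) x :=
      (SimpleGraph.ConnectedComponent.exact hx).symm
    obtain ⟨p⟩ := hreach
    have key : ∀ (a y : V) (p : G.Walk a y),
        a ∈ insert (s.get i) (leafSet T s i) → y ∈ insert (s.get i) (leafSet T s i) := by
      intro a y q
      induction q with
      | nil => exact id
      | cons h q ih => exact fun ha => ih (hstep _ _ ha h)
    exact key _ _ p (Set.mem_insert _ _)
  · rintro (rfl | ⟨hadj, hns⟩)
    · rfl
    · refine SimpleGraph.ConnectedComponent.sound ?_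
      refine SimpleGraph.Adj.reachable ?_
      rw [hG, del_adj hT hs]
      exact ⟨hadj.symm, fun h => hns h.1⟩

lemma supp_card (hT : T.IsTree) (hs : IsSpine T s) (i : Fin s.length) :
    Nat.card ((T.deleteEdges (spineEdges s)).connectedComponentMk (s.get i)).supp
      = 1 + (leafSet T s i).ncard := by
  rw [Nat.card_coe_set_eq, supp_structure hT hs i,
    Set.ncard_insert_of_notMem (fun h => h.2 (List.get_mem _ _)) (Set.toFinite _)]
  omega

lemma owner_exists (hT : T.IsTree) (hs : IsSpine T s) {x : V} (hx : x ∉ s) :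
    ∃ i : Fin s.length, T.Adj (s.get i) x := by
  have hd : deg T x = 1 := leaf_deg_one hT.isConnected hs hx
  obtain ⟨a, ha⟩ := Set.ncard_eq_one.mp hd
  have hadj : T.Adj x a := by
    have : a ∈ T.neighborSet x := ha ▸ rfl
    exact this
  have has : a ∈ s := leaf_nbr_mem hT.isConnected hs hx hadj
  obtain ⟨i, rfl⟩ := List.mem_iff_get.mp has
  exact ⟨i, hadj.symm⟩

lemma owner_unique (hT : T.IsTree) (hs : IsSpine T s) {x : V} (hx : x ∉ s)
    {i j : Fin s.length} (hi : T.Adj (s.get i) x) (hj : T.Adj (s.get j) x) : i = j := by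
  have hd : deg T x = 1 := leaf_deg_one hT.isConnected hs hx
  have := nbr_unique hd hi.symm hj.symm
  exact List.nodup_iff_injective_get.mp hs.2.1 this

lemma catComp_length : (catComp T s).length = s.length := by simp [catComp]

lemma catComp_get (hT : T.IsTree) (hs : IsSpine T s) (i : Fin s.length) :
    (catComp T s)[(i : ℕ)]'(by rw [catComp_length]; exact i.isLt)
      = 1 + (leafSet T s i).ncard := by
  have : (catComp T s)[(i : ℕ)]'(by rw [catComp_length]; exact i.isLt)
      = Nat.card ((T.deleteEdges (spineEdges s)).connectedComponentMk (s.get i)).supp := by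
    simp [catComp, List.get_eq_getElem]
  rw [this, supp_card hT hs i]

theorem iso_of_catComp_eq {W : Type} [Fintype W] {S : SimpleGraph W}
    (hT : T.IsTree) (hS : S.IsTree) {sT : List V} {sS : List W}
    (hsT : IsSpine T sT) (hsS : IsSpine S sS)
    (heq : catComp T sT = catComp S sS) : Nonempty (T ≃g S) := by
  classical
  have hlen : sT.length = sS.length := by
    have := congrArg List.length heq
    simpa [catComp] using this
  have hcard : ∀ i : Fin sT.length,
      (leafSet T sT i).ncard = (leafSet S sS (Fin.cast hlen i)).ncard := by
    intro i
    have h1 := catComp_get hT hsT i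
    have h2 := catComp_get hS hsS (Fin.cast hlen i)
    have h3 := List.getElem_of_eq heq (i := (i : ℕ))
      (by rw [catComp_length]; exact i.isLt)
    simp only [Fin.coe_cast] at h2
    omega
  have hfib : ∀ i : Fin sT.length,
      (leafSet T sT i) ≃ (leafSet S sS (Fin.cast hlen i)) := by
    intro i
    refine (Finite.card_eq.mp ?_).some
    rw [Nat.card_coe_set_eq, Nat.card_coe_set_eq, hcard i]
  let gT : (Σ i : Fin sT.length, (leafSet T sT i)) → {x : V // x ∉ sT} :=
    fun p => ⟨p.2.1, p.2.2.2⟩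
  have hgT : Function.Bijective gT := by
    constructor
    · rintro ⟨i, x, hx⟩ ⟨j, y, hy⟩ hxy
      have hval : x = y := congrArg Subtype.val hxy
      subst hval
      have : i = j := owner_unique hT hsT hx.2 hx.1 hy.1
      subst this; rfl
    · rintro ⟨x, hx⟩
      obtain ⟨i, hi⟩ := owner_exists hT hsT hx
      exact ⟨⟨i, x, hi, hx⟩, rfl⟩
  let gS : (Σ j : Fin sS.length, (leafSet S sS j)) → {x : W // x ∉ sS} :=
    fun p => ⟨p.2.1, p.2.2.2⟩
  have hgS : Function.Bijective gS := by
    constructor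
    · rintro ⟨i, x, hx⟩ ⟨j, y, hy⟩ hxy
      have hval : x = y := congrArg Subtype.val hxy
      subst hval
      have : i = j := owner_unique hS hsS hx.2 hx.1 hy.1
      subst this; rfl
    · rintro ⟨x, hx⟩
      obtain ⟨i, hi⟩ := owner_exists hS hsS hx
      exact ⟨⟨i, x, hi, hx⟩, rfl⟩
  let hfib' : (Σ i : Fin sT.length, (leafSet T sT i)) ≃
      (Σ j : Fin sS.length, (leafSet S sS j)) :=
    Equiv.sigmaCongr (finCongr hlen) hfib
  let E : V ≃ W :=
    ((Equiv.sumCompl (· ∈ sT)).symm.trans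
      ((Equiv.sumCongr (List.Nodup.getEquiv sT hsT.2.1).symm (Equiv.ofBijective gT hgT).symm).trans
        ((Equiv.sumCongr (finCongr hlen) hfib').trans
          ((Equiv.sumCongr (List.Nodup.getEquiv sS hsS.2.1) (Equiv.ofBijective gS hgS)).trans
            (Equiv.sumCompl (· ∈ sS))))))
  have hE1 : ∀ i : Fin sT.length, E (sT.get i) = sS.get (Fin.cast hlen i) := by
    intro i
    have hmem : sT.get i ∈ sT := List.get_mem sT i
    have hsymm : (List.Nodup.getEquiv sT hsT.2.1).symm ⟨sT.get i, hmem⟩ = i := by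
      rw [Equiv.symm_apply_eq]; rfl
    simp only [E, Equiv.trans_apply,
      Equiv.sumCompl_symm_apply_of_pos hmem,
      Equiv.sumCongr_apply, Sum.map_inl, hsymm, finCongr_apply]
    rfl
  have hE2 : ∀ (x : V) (hx : x ∉ sT), (E x ∉ sS) ∧
      ∀ i : Fin sT.length, T.Adj (sT.get i) x →
        S.Adj (sS.get (Fin.cast hlen i)) (E x) := by
    intro x hx
    set p := (Equiv.ofBijective gT hgT).symm ⟨x, hx⟩ with hp
    have hgp : gT p = ⟨x, hx⟩ := Equiv.apply_symm_apply (Equiv.ofBijective gT hgT) ⟨x, hx⟩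
    have hpx : (p.2.1 : V) = x := congrArg Subtype.val hgp
    have hcalc : E x = ((hfib p.1 p.2).1 : W) := by
      simp only [E, Equiv.trans_apply, Equiv.sumCompl_symm_apply_of_neg hx,
        Equiv.sumCongr_apply, Sum.map_inr, ← hp]
      rfl
    have hz := (hfib p.1 p.2).2
    constructor
    · rw [hcalc]; exact hz.2
    · intro i hi
      have hadj : T.Adj (sT.get p.1) x := hpx ▸ p.2.2.1
      have : i = p.1 := owner_unique hT hsT hx hi hadj
      rw [this, hcalc]
      exact hz.1
  refine ⟨⟨E, ?_⟩⟩
  intro x y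
  have key : ∀ (x y : V), x ∈ sT → y ∉ sT → (S.Adj (E x) (E y) ↔ T.Adj x y) := by
    intro x y hx hy
    obtain ⟨i, rfl⟩ := List.mem_iff_get.mp hx
    rw [hE1 i]
    constructor
    · intro h
      obtain ⟨j, hj⟩ := owner_exists hT hsT hy
      have h2 := (hE2 y hy).2 j hj
      have h3 : Fin.cast hlen i = Fin.cast hlen j :=
        owner_unique hS hsS (hE2 y hy).1 h h2
      have : i = j := by
        apply Fin.ext
        have := congrArg Fin.val h3
        simpa using this
      rw [this]; exact hj
    · intro h
      exact (hE2 y hy).2 i h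
  by_cases hx : x ∈ sT <;> by_cases hy : y ∈ sT
  · obtain ⟨i, rfl⟩ := List.mem_iff_get.mp hx
    obtain ⟨j, rfl⟩ := List.mem_iff_get.mp hy
    rw [hE1 i, hE1 j, spine_adj_iff hS hsS, spine_adj_iff hT hsT]
    simp
  · exact key x y hx hy
  · rw [S.adj_comm, T.adj_comm]
    exact key y x hy hx
  · constructor
    · intro h
      exact absurd (leaf_nbr_mem hS.isConnected hsS (hE2 x hx).1 h) (hE2 y hy).1
    · intro h
      exact absurd (leaf_nbr_mem hT.isConnected hsT hx h) hy

lemma getElem_congr' (l : List V) {i j : ℕ} (h : i = j) (hi : i < l.length) :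
    l[i]'hi = l[j]'(h ▸ hi) := by subst h; rfl

lemma spineEdges_reverse_subset (l : List V) : spineEdges l.reverse ⊆ spineEdges l := by
  rintro e ⟨i, h, rfl⟩
  have hn : l.reverse.length = l.length := List.length_reverse
  have hlen : i + 1 < l.length := hn ▸ h
  refine ⟨l.length - i - 2, by omega, ?_⟩
  rw [Sym2.eq_swap]
  simp only [List.get_eq_getElem]
  rw [List.getElem_reverse, List.getElem_reverse,
    getElem_congr' l (show l.length - 1 - (i + 1) = l.length - i - 2 from by omega),
    getElem_congr' l (show l.length - 1 - i = l.length - i - 2 + 1 from by omega)]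

lemma spineEdges_reverse (l : List V) : spineEdges l.reverse = spineEdges l := by
  refine Set.Subset.antisymm (spineEdges_reverse_subset l) ?_
  have := spineEdges_reverse_subset l.reverse
  rwa [List.reverse_reverse] at this

lemma isSpine_reverse (hs : IsSpine T s) : IsSpine T s.reverse := by
  refine ⟨fun h => hs.1 (by simpa using congrArg List.reverse h), List.nodup_reverse.mpr hs.2.1, ?_, ?_⟩
  · change List.IsChain T.Adj s.reverse
    rw [List.isChain_reverse]
    exact hs.2.2.1.imp fun _ _ h => h.symm
  · intro v
    rw [List.mem_reverse]
    exact hs.2.2.2 v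

lemma catComp_reverse : catComp T s.reverse = (catComp T s).reverse := by
  unfold catComp
  rw [spineEdges_reverse, List.map_reverse]

end AuxProof

/-- The map `Φ` taking a proper caterpillar to the
reverse-class of its composition is injective up to graph isomorphism. -/
theorem phi_injective_up_to_iso {V W : Type} [Fintype V] [Fintype W]
    (T : SimpleGraph V) (S : SimpleGraph W)
    (hT : IsProperCaterpillar T) (hS : IsProperCaterpillar S)
    (sT : List V) (sS : List W) (hsT : IsSpine T sT) (hsS : IsSpine S sS)
    (h : catComp T sT = catComp S sS ∨ catComp T sT = (catComp S sS).reverse) :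
    Nonempty (T ≃g S) := by
  rcases h with h | h
  · exact iso_of_catComp_eq hT.1 hS.1 hsT hsS h
  · have h2 : catComp T sT = catComp S sS.reverse := by
      rw [catComp_reverse]; exact h
    exact iso_of_catComp_eq hT.1 hS.1 hsT (isSpine_reverse hsS) h2
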